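/- The function u(x,y,z) = exp(-T(x,y,z)), where T(x,y,z) is the unique nonnegative solution of x(1-e^{-T}) + yT = z, satisfies the first-order PDE u + x·∂_x u + (x+y)·∂_z u = 0 at every interior point with x > 0, y > 0, z > 0, and satisfies u(x,y,0) = 1. -/

import Mathlib

open Real Filter

/-- Auxiliary: if `x*(1-exp(-t)) + y*t = z` with `t ≥ 0`, `x ≥ 0`, `y > 0`, `z > 0`,
then `t > 0`. -/
lemma aux_T_pos {x y z t : ℝ} (hx : 0 ≤ x) (hy : 0 < y) (hz : 0 < z)
    (ht0 : 0 ≤ t) (heq : x * (1 - Real.exp (-t)) + y * t = z) : 0 < t := by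
  rcases ht0.lt_or_eq with h | h
  · exact h
  · exfalso
    rw [← h] at heq
    simp at heq
    linarith

/-- Auxiliary: under the same hypotheses with `x > 0`, we get `y*t < z`. -/
lemma aux_yT_lt {x y z t : ℝ} (hx : 0 < x) (hy : 0 < y) (hz : 0 < z)
    (ht0 : 0 ≤ t) (heq : x * (1 - Real.exp (-t)) + y * t = z) : y * t < z := by
  have ht : 0 < t := aux_T_pos hx.le hy hz ht0 heq
  have he : Real.exp (-t) < 1 := Real.exp_lt_one_iff.mpr (by linarith)
  nlinarith

/-- Strict antitonicity of `s ↦ (z - y*s)/(1 - exp (-s))` on suitable ranges. -/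
lemma aux_phi_anti {y z a b : ℝ} (hy : 0 < y) (ha : 0 < a) (hab : a < b)
    (hb : y * b < z) :
    (z - y * b) / (1 - Real.exp (-b)) < (z - y * a) / (1 - Real.exp (-a)) := by
  have hea : Real.exp (-a) < 1 := Real.exp_lt_one_iff.mpr (by linarith)
  have heb : Real.exp (-b) < 1 := Real.exp_lt_one_iff.mpr (by linarith)
  have heab : Real.exp (-b) < Real.exp (-a) := Real.exp_lt_exp.mpr (by linarith)
  have hda : 0 < 1 - Real.exp (-a) := by linarith
  have hdb : 0 < 1 - Real.exp (-b) := by linarith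
  rw [div_lt_div_iff₀ hdb hda]
  nlinarith [mul_pos (sub_pos.mpr hb) (sub_pos.mpr heab),
    mul_pos (mul_pos hy (sub_pos.mpr hab)) hdb]

theorem u_satisfies_pde (T : ℝ → ℝ → ℝ → ℝ)
    (hT : ∀ x y z : ℝ, 0 ≤ x → 0 < y → 0 ≤ z →
      0 ≤ T x y z ∧ x * (1 - Real.exp (-(T x y z))) + y * T x y z = z) :
    (∀ x y : ℝ, 0 ≤ x → 0 < y → Real.exp (-(T x y 0)) = 1) ∧
    (∀ x y z : ℝ, 0 < x → 0 < y → 0 < z →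
      ∃ ux uz : ℝ,
        HasDerivAt (fun x' => Real.exp (-(T x' y z))) ux x ∧
        HasDerivAt (fun z' => Real.exp (-(T x y z'))) uz z ∧
        Real.exp (-(T x y z)) + x * ux + (x + y) * uz = 0) := by
  constructor
  · intro x y hx hy
    obtain ⟨ht0, heq⟩ := hT x y 0 hx hy le_rfl
    have he : Real.exp (-(T x y 0)) ≤ 1 := Real.exp_le_one_iff.mpr (by linarith)
    have ht : T x y 0 = 0 := by nlinarith
    rw [ht]; simp
  · intro x y z hx hy hz
    obtain ⟨ht0, heq⟩ := hT x y z hx.le hy hz.le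
    set t := T x y z with htdef
    have ht : 0 < t := aux_T_pos hx.le hy hz ht0 heq
    have htz : y * t < z := aux_yT_lt hx hy hz ht0 heq
    have he1 : Real.exp (-t) < 1 := Real.exp_lt_one_iff.mpr (by linarith)
    have hep : 0 < Real.exp (-t) := Real.exp_pos _
    have hde : 0 < 1 - Real.exp (-t) := by linarith
    have hd : 0 < x * Real.exp (-t) + y := by positivity
    -- derivative of s ↦ exp (-s)
    have hexpd : ∀ s : ℝ, HasDerivAt (fun s : ℝ => Real.exp (-s)) (-Real.exp (-s)) s := by
      intro s
      simpa using ((hasDerivAt_id s).neg).exp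
    -- the function F (inverse in z)
    have hFmono : StrictMono (fun s : ℝ => x * (1 - Real.exp (-s)) + y * s) := by
      intro a b hab
      have h1 : Real.exp (-b) ≤ Real.exp (-a) := Real.exp_le_exp.mpr (by linarith)
      have h2 : x * (1 - Real.exp (-a)) ≤ x * (1 - Real.exp (-b)) := by nlinarith
      simp only
      nlinarith
    have hF0 : (fun s : ℝ => x * (1 - Real.exp (-s)) + y * s) 0 = 0 := by simp
    -- Continuity of z ↦ T x y z at z
    have hcontz : ContinuousAt (fun z' => T x y z') z := by
      rw [Metric.continuousAt_iff]
      intro ε hε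
      set F := fun s : ℝ => x * (1 - Real.exp (-s)) + y * s with hFdef
      set lo := max (t - ε) 0 with hlodef
      have hlo : lo < t := max_lt (by linarith) ht
      have hFt : F t = z := heq
      have hFlo : F lo < z := by rw [← hFt]; exact hFmono hlo
      have hFhi : z < F (t + ε) := by rw [← hFt]; exact hFmono (by linarith)
      have hFlo0 : 0 ≤ F lo := by
        rw [← hF0]
        exact hFmono.monotone (le_max_right _ _)
      refine ⟨min (z - F lo) (F (t + ε) - z), lt_min (by linarith) (by linarith),
        fun {z'} hz' => ?_⟩
      rw [Real.dist_eq] at hz' ⊢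
      have h1 : |z' - z| < z - F lo := lt_of_lt_of_le hz' (min_le_left _ _)
      have h2 : |z' - z| < F (t + ε) - z := lt_of_lt_of_le hz' (min_le_right _ _)
      rw [abs_lt] at h1 h2
      have hz'0 : 0 ≤ z' := by linarith
      obtain ⟨ht0', heq'⟩ := hT x y z' hx.le hy hz'0
      have hFt' : F (T x y z') = z' := heq'
      have hl : lo < T x y z' := by
        rw [← hFmono.lt_iff_lt]
        rw [hFt']; linarith
      have hr : T x y z' < t + ε := by
        rw [← hFmono.lt_iff_lt]
        rw [hFt']; linarith
      have hl' : t - ε ≤ lo := le_max_left _ _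
      rw [abs_lt]
      constructor <;> [linarith; linarith]
    -- derivative of F at t
    have hFd : HasDerivAt (fun s : ℝ => x * (1 - Real.exp (-s)) + y * s)
        (x * Real.exp (-t) + y) t := by
      have h1 : HasDerivAt (fun s : ℝ => x * (1 - Real.exp (-s))) (x * Real.exp (-t)) t := by
        have := ((hasDerivAt_const t (1:ℝ)).sub (hexpd t)).const_mul x
        simpa using this
      have h2 : HasDerivAt (fun s : ℝ => y * s) y t := by
        simpa using (hasDerivAt_id t).const_mul y
      exact h1.add h2
    -- derivative of T in z
    have hTz : HasDerivAt (fun z' => T x y z') (x * Real.exp (-t) + y)⁻¹ z := by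
      refine HasDerivAt.of_local_left_inverse hcontz hFd (by positivity) ?_
      filter_upwards [eventually_gt_nhds hz] with z' hz'
      exact (hT x y z' hx.le hy hz'.le).2
    -- Continuity of x' ↦ T x' y z at x  (via Φ s = (z - y*s)/(1 - exp (-s)))
    set Φ := fun s : ℝ => (z - y * s) / (1 - Real.exp (-s)) with hΦdef
    have hΦt : Φ t = x := by
      have hnum : z - y * t = x * (1 - Real.exp (-t)) := by linarith
      rw [hΦdef]; simp only
      rw [hnum, mul_div_assoc, div_self hde.ne', mul_one]
    have hΦpos : ∀ s : ℝ, 0 < s → y * s < z → 0 < Φ s := by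
      intro s hs hsz
      have : Real.exp (-s) < 1 := Real.exp_lt_one_iff.mpr (by linarith)
      apply div_pos (by linarith) (by linarith)
    have hcontx : ContinuousAt (fun x' => T x' y z) x := by
      rw [Metric.continuousAt_iff]
      intro ε hε
      set ε' := min ε (min (t / 2) ((z - y * t) / (2 * y))) with hε'def
      have hε'pos : 0 < ε' := by
        apply lt_min hε
        exact lt_min (by linarith) (div_pos (by linarith) (by positivity))
      have hε'1 : ε' ≤ ε := min_le_left _ _
      have hε'2 : ε' ≤ t / 2 := le_trans (min_le_right _ _) (min_le_left _ _)
      have hε'3 : ε' ≤ (z - y * t) / (2 * y) := le_trans (min_le_right _ _) (min_le_right _ _)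
      have hlo : 0 < t - ε' := by linarith
      have hhi : y * (t + ε') < z := by
        have h := (le_div_iff₀ (by positivity : (0:ℝ) < 2 * y)).mp hε'3
        nlinarith
      have hΦ1 : x < Φ (t - ε') := by
        rw [← hΦt]
        exact aux_phi_anti hy hlo (by linarith) (by nlinarith)
      have hΦ2 : Φ (t + ε') < x := by
        rw [← hΦt]
        exact aux_phi_anti hy ht (by linarith) hhi
      have hΦ2pos : 0 < Φ (t + ε') := hΦpos _ (by linarith) hhi
      refine ⟨min (Φ (t - ε') - x) (x - Φ (t + ε')), lt_min (by linarith) (by linarith),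
        fun {x'} hx' => ?_⟩
      rw [Real.dist_eq] at hx' ⊢
      have h1 : |x' - x| < Φ (t - ε') - x := lt_of_lt_of_le hx' (min_le_left _ _)
      have h2 : |x' - x| < x - Φ (t + ε') := lt_of_lt_of_le hx' (min_le_right _ _)
      rw [abs_lt] at h1 h2
      have hx'pos : 0 < x' := by linarith
      obtain ⟨ht0', heq'⟩ := hT x' y z hx'pos.le hy hz.le
      set t' := T x' y z with ht'def
      have ht' : 0 < t' := aux_T_pos hx'pos.le hy hz ht0' heq'
      have ht'z : y * t' < z := aux_yT_lt hx'pos hy hz ht0' heq'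
      have hΦt' : Φ t' = x' := by
        have he' : Real.exp (-t') < 1 := Real.exp_lt_one_iff.mpr (by linarith)
        have hnum : z - y * t' = x' * (1 - Real.exp (-t')) := by linarith
        rw [hΦdef]; simp only
        rw [hnum, mul_div_assoc, div_self (by linarith : (1:ℝ) - Real.exp (-t') ≠ 0), mul_one]
      have hL : t - ε' < t' := by
        by_contra h
        push_neg at h
        rcases h.lt_or_eq with h' | h'
        · have hyz : y * (t - ε') < z := by nlinarith [mul_pos hy hε'pos]
          have h3 : Φ (t - ε') < Φ t' := aux_phi_anti hy ht' h' hyz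
          rw [hΦt'] at h3
          linarith
        · rw [h'] at hΦt'
          linarith
      have hR : t' < t + ε' := by
        by_contra h
        push_neg at h
        rcases h.lt_or_eq with h' | h'
        · have h3 : Φ t' < Φ (t + ε') := aux_phi_anti hy (by linarith : (0:ℝ) < t + ε') h' ht'z
          rw [hΦt'] at h3
          linarith
        · rw [← h'] at hΦt'
          linarith
      rw [abs_lt]
      constructor <;> [linarith; linarith]
    -- derivative of Φ at t
    have hΦd : HasDerivAt Φ (-((y + x * Real.exp (-t)) / (1 - Real.exp (-t)))) t := by
      have hnum : HasDerivAt (fun s : ℝ => z - y * s) (-y) t := by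
        exact ((hasDerivAt_const t z).sub ((hasDerivAt_id' t).const_mul y)).congr_deriv (by ring)
      have hden : HasDerivAt (fun s : ℝ => 1 - Real.exp (-s)) (Real.exp (-t)) t := by
        exact ((hasDerivAt_const t (1:ℝ)).sub (hexpd t)).congr_deriv (by ring)
      have := hnum.div hden hde.ne'
      refine this.congr_deriv ?_
      have hzyt : z - y * t = x * (1 - Real.exp (-t)) := by linarith
      rw [hzyt]
      field_simp
      ring
    have hΦ'ne : (-((y + x * Real.exp (-t)) / (1 - Real.exp (-t)))) ≠ 0 := by
      have : 0 < (y + x * Real.exp (-t)) / (1 - Real.exp (-t)) := by positivity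
      linarith
    -- derivative of T in x
    have hTx : HasDerivAt (fun x' => T x' y z)
        (-((y + x * Real.exp (-t)) / (1 - Real.exp (-t))))⁻¹ x := by
      have hΦd' : HasDerivAt Φ (-((y + x * Real.exp (-t)) / (1 - Real.exp (-t))))
          ((fun x' => T x' y z) x) := hΦd
      refine HasDerivAt.of_local_left_inverse hcontx hΦd' hΦ'ne ?_
      filter_upwards [eventually_gt_nhds hx] with x' hx'
      obtain ⟨ht0', heq'⟩ := hT x' y z hx'.le hy hz.le
      have ht' : 0 < T x' y z := aux_T_pos hx'.le hy hz ht0' heq'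
      have he' : Real.exp (-(T x' y z)) < 1 := Real.exp_lt_one_iff.mpr (by linarith)
      have hnum : z - y * T x' y z = x' * (1 - Real.exp (-(T x' y z))) := by linarith
      rw [hΦdef]; simp only
      rw [hnum, mul_div_assoc,
        div_self (by linarith : (1:ℝ) - Real.exp (-(T x' y z)) ≠ 0), mul_one]
    -- assemble
    refine ⟨Real.exp (-t) * -(-((y + x * Real.exp (-t)) / (1 - Real.exp (-t))))⁻¹,
      Real.exp (-t) * -(x * Real.exp (-t) + y)⁻¹, ?_, ?_, ?_⟩
    · exact hTx.neg.exp
    · exact hTz.neg.exp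
    · have h1 : (1:ℝ) - Real.exp (-t) ≠ 0 := hde.ne'
      have h2 : y + x * Real.exp (-t) ≠ 0 := by positivity
      have h3 : x * Real.exp (-t) + y ≠ 0 := hd.ne'
      rw [inv_neg, neg_neg, inv_div]
      field_simp
      ring
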